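/- Let G be a nonsingular simple graph on n vertices with m edges, adjacency matrix A, eigenvalues ordered by absolute value so that μ₁ ≥ μ₂ are the two largest absolute values of eigenvalues, with μ₁ = λ₁ > 0 and μ₂ > 0. Then E(G) ≥ μ₁ + (n−1)·(√(μ₂² + 2μ₂·(|det A|/μ₁)^(1/(n−1)) + (2m−μ₁²)/(n−1)) − μ₂). -/

import Mathlib

open Finset Matrix

lemma aux_log_ineq (b g : ℝ) (hg : 0 < g) (hgb : g ≤ b) (x : ℝ) (hx : 0 < x) (hxb : x ≤ b) :
    x^2 - 2*(b+g)*x + (2*b*g + g^2) ≤ 2*b*g*(Real.log g - Real.log x) := by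
  set f : ℝ → ℝ := fun y => 2*b*g*(Real.log g - Real.log y) - ((y-g)^2 - 2*b*(y-g)) with hf
  have hfg : f g = 0 := by simp [hf]
  have hderiv : ∀ y : ℝ, 0 < y → HasDerivAt f (2*b*g * (-y⁻¹) - (2*(y-g) - 2*b)) y := by
    intro y hy
    have h1 : HasDerivAt (fun y : ℝ => 2*b*g*(Real.log g - Real.log y)) (2*b*g * (-y⁻¹)) y :=
      ((Real.hasDerivAt_log (ne_of_gt hy)).const_sub (Real.log g)).const_mul (2*b*g)
    have h2 : HasDerivAt (fun y : ℝ => (y-g)^2 - 2*b*(y-g)) (2*(y-g) - 2*b) y := by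
      have ha : HasDerivAt (fun y : ℝ => y - g) 1 y := (hasDerivAt_id y).sub_const g
      have := (ha.fun_pow 2).fun_sub (ha.const_mul (2*b))
      refine this.congr_deriv ?_
      ring
    exact h1.sub h2
  have hcont : ∀ s : Set ℝ, s ⊆ Set.Ioi (0:ℝ) → ContinuousOn f s := by
    intro s hs
    have hlogc : ContinuousOn Real.log s := Real.continuousOn_log.mono
      (fun y hy => by simp only [Set.mem_compl_iff, Set.mem_singleton_iff]; exact ne_of_gt (hs hy))
    exact (continuousOn_const.mul (continuousOn_const.sub hlogc)).sub
      (((continuousOn_id.sub continuousOn_const).pow 2).sub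
        (continuousOn_const.mul (continuousOn_id.sub continuousOn_const)))
  have key : 0 ≤ f x := by
    rcases lt_trichotomy x g with h | h | h
    · have hanti : StrictAntiOn f (Set.Icc x g) := by
        apply strictAntiOn_of_deriv_neg (convex_Icc _ _)
          (hcont _ (fun y hy => lt_of_lt_of_le hx hy.1))
        intro y hy
        rw [interior_Icc] at hy
        have hy0 : 0 < y := lt_trans hx hy.1
        rw [(hderiv y hy0).deriv]
        have heq : 2*b*g * (-y⁻¹) - (2*(y-g) - 2*b) = (-2*(g-y)*(b-y))/y := by
          field_simp
          ring
        rw [heq]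
        apply div_neg_of_neg_of_pos _ hy0
        nlinarith [hy.2, lt_of_lt_of_le hy.2 hgb]
      have := hanti (Set.mem_Icc.2 ⟨le_refl x, le_of_lt h⟩)
        (Set.mem_Icc.2 ⟨le_of_lt h, le_refl g⟩) h
      rw [hfg] at this
      exact le_of_lt this
    · rw [h, hfg]
    · have hmono : StrictMonoOn f (Set.Icc g x) := by
        apply strictMonoOn_of_deriv_pos (convex_Icc _ _)
          (hcont _ (fun y hy => lt_of_lt_of_le hg hy.1))
        intro y hy
        rw [interior_Icc] at hy
        have hy0 : 0 < y := lt_trans hg hy.1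
        rw [(hderiv y hy0).deriv]
        have heq : 2*b*g * (-y⁻¹) - (2*(y-g) - 2*b) = (2*(y-g)*(b-y))/y := by
          field_simp
          ring
        rw [heq]
        apply div_pos _ hy0
        nlinarith [hy.1, lt_of_lt_of_le hy.2 hxb]
      have := hmono (Set.mem_Icc.2 ⟨le_refl g, le_of_lt h⟩)
        (Set.mem_Icc.2 ⟨le_of_lt h, le_refl x⟩) h
      rw [hfg] at this
      exact le_of_lt this
  simp only [hf] at key
  nlinarith [key]

lemma trace_sq {V : Type*} [Fintype V] [DecidableEq V] (A : Matrix V V ℝ)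
    (hA : A.IsHermitian) : (A * A).trace = ∑ i, hA.eigenvalues i ^ 2 := by
  have hdiag : star (hA.eigenvectorUnitary : Matrix V V ℝ) * A * (hA.eigenvectorUnitary : Matrix V V ℝ) =
      diagonal (RCLike.ofReal ∘ hA.eigenvalues) := by
    have := hA.conjStarAlgAut_star_eigenvectorUnitary
    simpa [Unitary.conjStarAlgAut_star_apply] using this
  set U : Matrix V V ℝ := (hA.eigenvectorUnitary : Matrix V V ℝ) with hU
  have hU1 : U * star U = 1 := Unitary.coe_mul_star_self _
  have hU2 : star U * U = 1 := Unitary.coe_star_mul_self _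
  have e1 : star U * (A * A) * U =
      (star U * A * U) * (star U * A * U) := by
    calc star U * (A * A) * U = star U * A * (U * star U) * A * U := by
          rw [hU1, mul_one]; noncomm_ring
      _ = (star U * A * U) * (star U * A * U) := by
          noncomm_ring
  have e2 : (A * A).trace = (star U * (A * A) * U).trace := by
    rw [trace_mul_cycle, ← mul_assoc, hU1, one_mul]
  rw [e2, e1, hdiag, diagonal_mul_diagonal, trace_diagonal]
  simp [Function.comp, pow_two]

theorem stmt_14 {V : Type*} [Fintype V] [DecidableEq V]
    (G : SimpleGraph V) [DecidableRel G.Adj]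
    (hA : (G.adjMatrix ℝ).IsHermitian)
    (hdet : (G.adjMatrix ℝ).det ≠ 0)
    (mu1 mu2 : ℝ) (hmu1pos : 0 < mu1) (hmu2pos : 0 < mu2)
    (i0 : V) (hi0 : hA.eigenvalues i0 = mu1)
    (hmax1 : ∀ i, |hA.eigenvalues i| ≤ mu1)
    (hmax2 : ∀ i, i ≠ i0 → |hA.eigenvalues i| ≤ mu2)
    (hmem2 : ∃ i, i ≠ i0 ∧ |hA.eigenvalues i| = mu2) :
    ∑ i, |hA.eigenvalues i| ≥
      mu1 + ((Fintype.card V : ℝ) - 1) *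
        (Real.sqrt (mu2 ^ 2 +
            2 * mu2 * (|(G.adjMatrix ℝ).det| / mu1) ^ ((1 : ℝ) / ((Fintype.card V : ℝ) - 1)) +
            (2 * (G.edgeFinset.card : ℝ) - mu1 ^ 2) / ((Fintype.card V : ℝ) - 1)) - mu2) := by
  classical
  set e : V → ℝ := hA.eigenvalues with he
  set s : Finset V := Finset.univ.erase i0 with hs
  -- determinant = product of eigenvalues
  have hdetprod : (G.adjMatrix ℝ).det = ∏ i, e i := by
    have := hA.det_eq_prod_eigenvalues
    simpa using this
  have hene : ∀ i, e i ≠ 0 := by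
    intro i
    rw [hdetprod] at hdet
    exact fun h => hdet (Finset.prod_eq_zero (Finset.mem_univ i) h)
  have hapos : ∀ i, 0 < |e i| := fun i => abs_pos.2 (hene i)
  -- cardinalities
  have hcard2 : 2 ≤ Fintype.card V := by
    obtain ⟨j, hj, -⟩ := hmem2
    exact Fintype.one_lt_card_iff.2 ⟨j, i0, hj⟩
  have hscard : s.card = Fintype.card V - 1 := by
    rw [hs, Finset.card_erase_of_mem (Finset.mem_univ i0), Finset.card_univ]
  set N : ℝ := (s.card : ℝ) with hN
  have hNval : (Fintype.card V : ℝ) - 1 = N := by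
    rw [hN, hscard]
    have : (1:ℕ) ≤ Fintype.card V := le_trans one_le_two hcard2
    push_cast [this]
    ring
  have hNpos : 0 < N := by
    rw [hN]
    have : 1 ≤ s.card := by omega
    exact_mod_cast lt_of_lt_of_le zero_lt_one (by exact_mod_cast this)
  -- product over s
  set P : ℝ := ∏ i ∈ s, |e i| with hP
  have hPpos : 0 < P := Finset.prod_pos fun i _ => hapos i
  have habs_i0 : |e i0| = mu1 := by rw [hi0]; exact abs_of_pos hmu1pos
  have hdetP : |(G.adjMatrix ℝ).det| / mu1 = P := by
    rw [hdetprod, Finset.abs_prod,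
      ← Finset.mul_prod_erase _ (fun i => |e i|) (Finset.mem_univ i0), habs_i0,
      mul_div_cancel_left₀ _ (ne_of_gt hmu1pos)]
  set g : ℝ := P ^ ((1:ℝ)/N) with hg
  have hgpos : 0 < g := Real.rpow_pos_of_pos hPpos _
  have hamem : ∀ i ∈ s, |e i| ≤ mu2 := fun i hi => hmax2 i (Finset.ne_of_mem_erase hi)
  have hgle : g ≤ mu2 := by
    have hPle : P ≤ mu2 ^ s.card := by
      calc P ≤ ∏ _i ∈ s, mu2 := Finset.prod_le_prod (fun i _ => abs_nonneg _) hamem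
        _ = mu2 ^ s.card := Finset.prod_const mu2
    have h1 : g ≤ (mu2 ^ s.card) ^ ((1:ℝ)/N) :=
      Real.rpow_le_rpow (le_of_lt hPpos) hPle (by positivity)
    calc g ≤ (mu2 ^ s.card) ^ ((1:ℝ)/N) := h1
      _ = mu2 := by
        rw [← Real.rpow_natCast mu2 s.card, ← Real.rpow_mul (le_of_lt hmu2pos), ← hN,
          mul_one_div, div_self (ne_of_gt hNpos), Real.rpow_one]
  -- log sum is zero
  have hlogsum : ∑ i ∈ s, (Real.log g - Real.log |e i|) = 0 := by
    have h1 : ∑ i ∈ s, Real.log |e i| = Real.log P := by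
      rw [hP, Real.log_prod]
      exact fun i _ => ne_of_gt (hapos i)
    rw [Finset.sum_sub_distrib, h1, Finset.sum_const, hg, Real.log_rpow hPpos, nsmul_eq_mul, ← hN]
    field_simp
    ring
  -- key summed inequality
  set S : ℝ := ∑ i ∈ s, |e i| with hS
  set Q : ℝ := ∑ i ∈ s, |e i|^2 with hQ
  have hstar : Q + N*(g^2 + 2*mu2*g) ≤ 2*(mu2+g)*S := by
    have hpt : ∀ i ∈ s, |e i|^2 - 2*(mu2+g)*|e i| + (2*mu2*g + g^2) ≤
        2*mu2*g*(Real.log g - Real.log |e i|) := fun i hi =>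
      aux_log_ineq mu2 g hgpos hgle _ (hapos i) (hamem i hi)
    have hchain : Q - 2*(mu2+g)*S + N*(2*mu2*g + g^2) ≤ 0 := by
      calc Q - 2*(mu2+g)*S + N*(2*mu2*g + g^2)
          = ∑ i ∈ s, (|e i|^2 - 2*(mu2+g)*|e i| + (2*mu2*g + g^2)) := by
            rw [Finset.sum_add_distrib, Finset.sum_sub_distrib, ← Finset.mul_sum,
              Finset.sum_const, nsmul_eq_mul, hQ, hS, hN]
        _ ≤ ∑ i ∈ s, 2*mu2*g*(Real.log g - Real.log |e i|) := Finset.sum_le_sum hpt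
        _ = 2*mu2*g * ∑ i ∈ s, (Real.log g - Real.log |e i|) := (Finset.mul_sum _ _ _).symm
        _ = 0 := by rw [hlogsum, mul_zero]
    nlinarith [hchain]
  -- trace identities
  have htr : ∑ i, e i ^ 2 = 2 * (G.edgeFinset.card : ℝ) := by
    have h1 := trace_sq (G.adjMatrix ℝ) hA
    have h2 : (G.adjMatrix ℝ * G.adjMatrix ℝ).trace = ∑ v, (G.degree v : ℝ) := by
      rw [Matrix.trace]
      congr 1
      funext v
      exact G.adjMatrix_mul_self_apply_self v
    have h3 : ∑ v, (G.degree v : ℝ) = 2 * (G.edgeFinset.card : ℝ) := by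
      exact_mod_cast congrArg (Nat.cast : ℕ → ℝ) G.sum_degrees_eq_twice_card_edges
    rw [← h1, h2, h3]
  have hQval : (2 * (G.edgeFinset.card : ℝ) - mu1^2) = Q := by
    rw [← htr, hQ]
    have : ∑ i, e i ^ 2 = e i0 ^ 2 + ∑ i ∈ s, e i ^ 2 := by
      rw [hs, ← Finset.add_sum_erase _ _ (Finset.mem_univ i0)]
    rw [this, hi0]
    simp only [sq_abs]
    ring
  -- total sum
  have hsumtotal : ∑ i, |e i| = mu1 + S := by
    rw [hS, hs, ← Finset.add_sum_erase _ _ (Finset.mem_univ i0), habs_i0]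
  -- nonnegativity facts
  have hSnn : 0 ≤ S := Finset.sum_nonneg fun i _ => abs_nonneg _
  have hQnn : 0 ≤ Q := Finset.sum_nonneg fun i _ => sq_nonneg _
  -- final algebra
  rw [hsumtotal, hNval, hdetP, ← hg, hQval, ge_iff_le]
  clear_value S Q g P N
  have hN0 : N ≠ 0 := ne_of_gt hNpos
  have hX : mu2^2 + 2*mu2*g + Q/N ≤ ((S + N*mu2)/N)^2 := by
    rw [div_pow, le_div_iff₀ (by positivity)]
    have h1 : (mu2^2 + 2*mu2*g + Q/N)*N^2 = mu2^2*N^2 + 2*mu2*g*N^2 + Q*N := by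
      field_simp
    rw [h1]
    nlinarith [sq_nonneg (S - N*g), hstar, hNpos, hSnn, hgpos, hmu2pos]
  have hsq : Real.sqrt (mu2^2 + 2*mu2*g + Q/N) ≤ (S + N*mu2)/N :=
    le_trans (Real.sqrt_le_sqrt hX) (le_of_eq (Real.sqrt_sq (by positivity)))
  calc mu1 + N * (Real.sqrt (mu2^2 + 2*mu2*g + Q/N) - mu2)
      ≤ mu1 + N * ((S + N*mu2)/N - mu2) := by
        apply (add_le_add_iff_left mu1).2
        apply mul_le_mul_of_nonneg_left _ (le_of_lt hNpos)
        linarith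
    _ = mu1 + S := by field_simp; ring
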